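/- Let K₁, …, K_m ⊆ ℝⁿ be closed sets having linearly regular intersection at x̄ ∈ K = ∩ K_l. Then there exists δ > 0 such that for every x ∈ B(x̄, δ) ∩ K, the implication holds: Σ_{l=1}^m v_l = 0 with v_l ∈ N_{K_l}(x) implies v_l = 0 for all l. (Linearly regular intersection persists at all points of K near x̄.) -/
import Mathlib


open scoped RealInnerProductSpace
open Metric Filter

/-- The regular (Fréchet) normal cone of `C` at `x`. -/
def regNormalCone {n : ℕ} (C : Set (EuclideanSpace ℝ (Fin n)))
    (x : EuclideanSpace ℝ (Fin n)) : Set (EuclideanSpace ℝ (Fin n)) :=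
  {v | ∀ ε > 0, ∃ δ > 0, ∀ y ∈ C, ‖y - x‖ < δ → ⟪v, y - x⟫ ≤ ε * ‖y - x‖}

/-- The limiting normal cone of `C` at `x`: limits of regular normals at points of `C`
converging to `x`. -/
def limNormalCone {n : ℕ} (C : Set (EuclideanSpace ℝ (Fin n)))
    (x : EuclideanSpace ℝ (Fin n)) : Set (EuclideanSpace ℝ (Fin n)) :=
  {v | ∃ xs vs : ℕ → EuclideanSpace ℝ (Fin n), (∀ i, xs i ∈ C) ∧
    Tendsto xs atTop (nhds x) ∧ (∀ i, vs i ∈ regNormalCone C (xs i)) ∧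
    Tendsto vs atTop (nhds v)}

lemma regNormalCone_smul {n : ℕ} {C : Set (EuclideanSpace ℝ (Fin n))}
    {x v : EuclideanSpace ℝ (Fin n)} (hv : v ∈ regNormalCone C x) {c : ℝ} (hc : 0 < c) :
    c • v ∈ regNormalCone C x := by
  intro ε hε
  obtain ⟨δ, hδ, h⟩ := hv (ε / c) (by positivity)
  refine ⟨δ, hδ, fun y hy hyd => ?_⟩
  rw [real_inner_smul_left]
  calc c * ⟪v, y - x⟫ ≤ c * ((ε / c) * ‖y - x‖) :=
        mul_le_mul_of_nonneg_left (h y hy hyd) hc.le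
    _ = ε * ‖y - x‖ := by field_simp

lemma limNormalCone_smul {n : ℕ} {C : Set (EuclideanSpace ℝ (Fin n))}
    {x v : EuclideanSpace ℝ (Fin n)} (hv : v ∈ limNormalCone C x) {c : ℝ} (hc : 0 < c) :
    c • v ∈ limNormalCone C x := by
  obtain ⟨xs, vs, hxsC, hxs, hvs, hv⟩ := hv
  exact ⟨xs, fun i => c • vs i, hxsC, hxs, fun i => regNormalCone_smul (hvs i) hc,
    hv.const_smul c⟩

/-- Outer semicontinuity of the limiting normal cone. -/
lemma limNormalCone_osc {n : ℕ} {C : Set (EuclideanSpace ℝ (Fin n))}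
    {x v : EuclideanSpace ℝ (Fin n)} {xk vk : ℕ → EuclideanSpace ℝ (Fin n)}
    (hvk : ∀ i, vk i ∈ limNormalCone C (xk i))
    (hx : Tendsto xk atTop (nhds x)) (hv : Tendsto vk atTop (nhds v)) :
    v ∈ limNormalCone C x := by
  have key : ∀ i : ℕ, ∃ y w : EuclideanSpace ℝ (Fin n), y ∈ C ∧
      dist y (xk i) < 1 / (i + 1) ∧ w ∈ regNormalCone C y ∧ dist w (vk i) < 1 / (i + 1) := by
    intro i
    obtain ⟨ys, ws, hysC, hys, hws, hwv⟩ := hvk i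
    have h1 : ∀ᶠ j in atTop, ys j ∈ ball (xk i) (1 / (i + 1)) :=
      hys (ball_mem_nhds _ (by positivity))
    have h2 : ∀ᶠ j in atTop, ws j ∈ ball (vk i) (1 / (i + 1)) :=
      hwv (ball_mem_nhds _ (by positivity))
    obtain ⟨j, hj1, hj2⟩ := (h1.and h2).exists
    exact ⟨ys j, ws j, hysC j, mem_ball.mp hj1, hws j, mem_ball.mp hj2⟩
  choose y w hyC hyd hwreg hwd using key
  have hinv : Tendsto (fun i : ℕ => 1 / ((i : ℝ) + 1)) atTop (nhds 0) :=
    tendsto_one_div_add_atTop_nhds_zero_nat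
  have hy : Tendsto y atTop (nhds x) := by
    rw [tendsto_iff_dist_tendsto_zero]
    refine squeeze_zero (fun i => dist_nonneg)
      (fun i => (dist_triangle (y i) (xk i) x).trans
        (add_le_add (hyd i).le le_rfl)) ?_
    have := hinv.add (tendsto_iff_dist_tendsto_zero.mp hx)
    simpa using this
  have hw : Tendsto w atTop (nhds v) := by
    rw [tendsto_iff_dist_tendsto_zero]
    refine squeeze_zero (fun i => dist_nonneg)
      (fun i => (dist_triangle (w i) (vk i) v).trans
        (add_le_add (hwd i).le le_rfl)) ?_
    have := hinv.add (tendsto_iff_dist_tendsto_zero.mp hv)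
    simpa using this
  exact ⟨y, w, hyC, hy, hwreg, hw⟩

/-- Linearly regular intersection persists at all points of the intersection near `x̄`. -/
theorem linreg_persists {n m : ℕ}
    (K : Fin m → Set (EuclideanSpace ℝ (Fin n))) (hK : ∀ l, IsClosed (K l))
    (xbar : EuclideanSpace ℝ (Fin n)) (hxbar : xbar ∈ ⋂ l, K l)
    (hlinreg : ∀ v : Fin m → EuclideanSpace ℝ (Fin n),
      (∀ l, v l ∈ limNormalCone (K l) xbar) → (∑ l, v l) = 0 → ∀ l, v l = 0) :
    ∃ δ > 0, ∀ x ∈ closedBall xbar δ ∩ ⋂ l, K l,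
      ∀ v : Fin m → EuclideanSpace ℝ (Fin n), (∀ l, v l ∈ limNormalCone (K l) x) →
        (∑ l, v l) = 0 → ∀ l, v l = 0 := by
  by_contra hcon
  push_neg at hcon
  have key : ∀ k : ℕ, ∃ x : EuclideanSpace ℝ (Fin n),
      (x ∈ closedBall xbar (1 / (k + 1)) ∩ ⋂ l, K l) ∧
      ∃ v : Fin m → EuclideanSpace ℝ (Fin n), (∀ l, v l ∈ limNormalCone (K l) x) ∧
        (∑ l, v l) = 0 ∧ ∃ l, v l ≠ 0 := by
    intro k
    obtain ⟨x, hx, v, hv1, hv2, hv3⟩ := hcon (1 / (k + 1)) (by positivity)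
    exact ⟨x, hx, v, hv1, hv2, hv3⟩
  choose xx hxx vv hvv1 hvv2 hvv3 using key
  -- normalize
  set s : ℕ → ℝ := fun k => ∑ l, ‖vv k l‖ with hs
  have hspos : ∀ k, 0 < s k := by
    intro k
    obtain ⟨l0, hl0⟩ := hvv3 k
    exact Finset.sum_pos' (fun l _ => norm_nonneg _)
      ⟨l0, Finset.mem_univ _, norm_pos_iff.mpr hl0⟩
  set u : ℕ → Fin m → EuclideanSpace ℝ (Fin n) := fun k l => (s k)⁻¹ • vv k l with hu
  have humem : ∀ k l, u k l ∈ limNormalCone (K l) (xx k) := fun k l =>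
    limNormalCone_smul (hvv1 k l) (inv_pos.mpr (hspos k))
  have husum : ∀ k, (∑ l, u k l) = 0 := by
    intro k
    simp only [hu, ← Finset.smul_sum, hvv2 k, smul_zero]
  have hunorm : ∀ k, (∑ l, ‖u k l‖) = 1 := by
    intro k
    have : ∀ l, ‖u k l‖ = (s k)⁻¹ * ‖vv k l‖ := by
      intro l
      simp only [hu]
      rw [norm_smul, Real.norm_eq_abs, abs_of_pos (inv_pos.mpr (hspos k))]
    rw [Finset.sum_congr rfl (fun l _ => this l), ← Finset.mul_sum]
    exact inv_mul_cancel₀ (hspos k).ne'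
  -- compactness
  have hub : ∀ k, u k ∈ closedBall (0 : Fin m → EuclideanSpace ℝ (Fin n)) 1 := by
    intro k
    rw [mem_closedBall, dist_zero_right]
    refine pi_norm_le_iff_of_nonneg zero_le_one |>.mpr fun l => ?_
    calc ‖u k l‖ ≤ ∑ l', ‖u k l'‖ :=
          Finset.single_le_sum (fun l' _ => norm_nonneg _) (Finset.mem_univ l)
      _ = 1 := hunorm k
  obtain ⟨ulim, -, φ, hφ, hφt⟩ :=
    tendsto_subseq_of_bounded isBounded_closedBall hub
  have hcomp : ∀ l, Tendsto (fun k => u (φ k) l) atTop (nhds (ulim l)) :=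
    fun l => (tendsto_pi_nhds.mp hφt) l
  -- x tends to xbar
  have hxt : Tendsto xx atTop (nhds xbar) := by
    rw [tendsto_iff_dist_tendsto_zero]
    exact squeeze_zero (g := fun k : ℕ => 1 / ((k : ℝ) + 1)) (fun k => dist_nonneg)
      (fun k => mem_closedBall.mp (hxx k).1) tendsto_one_div_add_atTop_nhds_zero_nat
  have hxφ : Tendsto (fun k => xx (φ k)) atTop (nhds xbar) :=
    hxt.comp hφ.tendsto_atTop
  -- limit membership
  have hulim_mem : ∀ l, ulim l ∈ limNormalCone (K l) xbar := by
    intro l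
    exact limNormalCone_osc (fun k => humem (φ k) l) hxφ (hcomp l)
  -- sum zero
  have hsum0 : (∑ l, ulim l) = 0 := by
    have h1 : Tendsto (fun k => ∑ l, u (φ k) l) atTop (nhds (∑ l, ulim l)) :=
      tendsto_finset_sum _ (fun l _ => hcomp l)
    have h2 : Tendsto (fun k => ∑ l, u (φ k) l) atTop (nhds 0) := by
      simp only [fun k => husum (φ k)]
      exact tendsto_const_nhds
    exact tendsto_nhds_unique h1 h2
  -- sum of norms one
  have hnorm1 : (∑ l, ‖ulim l‖) = 1 := by
    have h1 : Tendsto (fun k => ∑ l, ‖u (φ k) l‖) atTop (nhds (∑ l, ‖ulim l‖)) :=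
      tendsto_finset_sum _ (fun l _ => (hcomp l).norm)
    have h2 : Tendsto (fun k => ∑ l, ‖u (φ k) l‖) atTop (nhds 1) := by
      simp only [fun k => hunorm (φ k)]
      exact tendsto_const_nhds
    exact tendsto_nhds_unique h1 h2
  have := hlinreg ulim hulim_mem hsum0
  simp only [this, norm_zero, Finset.sum_const_zero] at hnorm1
  exact zero_ne_one hnorm1
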